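/- arXiv:2308.09930 — 3 statements merged into one kernel-verified Lean document; each statement's English description precedes it below -/
import Mathlib

section
/- Let T be the bilateral shift operator on L^2 of the unit circle (multiplication by e^{iθ}). For complex numbers z0, z1, z2, the 2×2 operator matrix [[z0, z1·T + z2],[z1·T* + z2, z0]] is invertible if and only if z0² − z1² − z2² − 2·z1·z2·x ≠ 0 for every real x with −1 ≤ x ≤ 1. -/
open ContinuousLinearMap

/-- `ℓ²(ℤ)`, a concrete model of `L²(𝕋)` in which the bilateral shift
(multiplication by `e^{iθ}`) acts by shifting coordinates. -/
noncomputable abbrev HT : Type := lp (fun _ : ℤ => ℂ) 2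

open scoped ENNReal InnerProductSpace

set_option synthInstance.maxHeartbeats 1000000 in
instance : Nontrivial HT := by
  refine ⟨lp.single 2 0 1, 0, fun h => ?_⟩
  have := congrFun (congrArg (fun f : HT => (f : ℤ → ℂ)) h) 0
  simp [lp.single_apply_self] at this

noncomputable instance : NormOneClass (HT →L[ℂ] HT) := inferInstance

lemma two_pos' : (0:ℝ) < ((2:ℝ≥0∞)).toReal := by norm_num

section
variable (T : HT →L[ℂ] HT) (hT : ∀ (f : HT) (n : ℤ), T f n = f (n - 1))

-- ext via singles
lemma ext_singles {A B : HT →L[ℂ] HT}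
    (h : ∀ (n : ℤ) (a : ℂ), A (lp.single 2 n a) = B (lp.single 2 n a)) : A = B := by
  refine ContinuousLinearMap.ext fun f => ?_
  have hf : HasSum (fun i : ℤ => lp.single 2 i (f i)) f :=
    lp.hasSum_single (by norm_num) f
  have hA : HasSum (fun i : ℤ => A (lp.single 2 i (f i))) (A f) := hf.mapL A
  have hB : HasSum (fun i : ℤ => B (lp.single 2 i (f i))) (B f) := hf.mapL B
  refine hA.unique ?_
  simpa only [h] using hB

include hT in
lemma T_single (n : ℤ) (a : ℂ) : T (lp.single 2 n a) = lp.single 2 (n+1) a := by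
  apply lp.ext
  funext m
  rw [hT]
  by_cases h : m = n + 1
  · subst h
    simp [lp.single_apply_self, lp.single_apply]
  · rw [lp.single_apply_ne _ _ _ h, lp.single_apply_ne]
    omega

include hT in
lemma adj_single (n : ℤ) (a : ℂ) : adjoint T (lp.single 2 n a) = lp.single 2 (n-1) a := by
  have key : ∀ g : HT, ⟪adjoint T (lp.single 2 n a), g⟫_ℂ = ⟪(lp.single 2 (n-1) a : HT), g⟫_ℂ := by
    intro g
    rw [adjoint_inner_left, lp.inner_single_left, lp.inner_single_left, hT]
  exact ext_inner_right ℂ key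

include hT in
lemma T_adj_T : T ∘L adjoint T = 1 := by
  apply ext_singles
  intro n a
  simp [adj_single T hT, T_single T hT]

include hT in
lemma adj_T_T : adjoint T ∘L T = 1 := by
  apply ext_singles
  intro n a
  simp [adj_single T hT, T_single T hT]

include hT in
lemma norm_T_apply (f : HT) : ‖T f‖ = ‖f‖ := by
  rw [lp.norm_eq_tsum_rpow two_pos' (T f), lp.norm_eq_tsum_rpow two_pos' f]
  congr 1
  have : ∀ n : ℤ, ‖T f n‖ ^ ((2:ℝ≥0∞)).toReal = ‖f (n - 1)‖ ^ ((2:ℝ≥0∞)).toReal := by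
    intro n; rw [hT]
  rw [tsum_congr this]
  exact (Equiv.subRight (1:ℤ)).tsum_eq (fun n => ‖f n‖ ^ ((2:ℝ≥0∞)).toReal)

include hT in
lemma norm_T_le : ‖T‖ ≤ 1 := by
  refine opNorm_le_bound T zero_le_one (fun f => ?_)
  rw [norm_T_apply T hT, one_mul]

include hT in
lemma norm_adjT_le : ‖adjoint T‖ ≤ 1 := by
  rw [← star_eq_adjoint]
  calc ‖star T‖ = ‖T‖ := norm_star T
  _ ≤ 1 := norm_T_le T hT

end

lemma isUnit_smul_sub (S : HT →L[ℂ] HT) (hS : IsSelfAdjoint S) (hn : ‖S‖ ≤ 2) (μ : ℂ)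
    (h : ∀ x : ℝ, -2 ≤ x → x ≤ 2 → μ ≠ (x:ℂ)) : IsUnit (μ • (1 : HT →L[ℂ] HT) - S) := by
  by_contra hc
  have hmem : μ ∈ spectrum ℂ S := by
    rw [spectrum.mem_iff]
    rw [Algebra.algebraMap_eq_smul_one]; exact hc
  have hre : μ = (μ.re : ℂ) := hS.mem_spectrum_eq_re hmem
  have hb : ‖μ‖ ≤ 2 := le_trans (spectrum.norm_le_norm_of_mem hmem) hn
  have habs : |μ.re| ≤ 2 := by
    calc |μ.re| ≤ ‖μ‖ := Complex.abs_re_le_norm μ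
    _ ≤ 2 := hb
  exact h μ.re (by linarith [abs_le.mp habs]) (abs_le.mp habs).2 hre

section
variable (T : HT →L[ℂ] HT)
  (hTT' : T * adjoint T = 1) (hT'T : adjoint T * T = 1) (z0 z1 z2 : ℂ)

-- abbreviations
local notation "B" => z1 • T + z2 • (1 : HT →L[ℂ] HT)
local notation "C" => z1 • (adjoint T) + z2 • (1 : HT →L[ℂ] HT)
local notation "S" => T + adjoint T

include hTT' hT'T in
lemma BC_eq : (B) * (C) = (z1^2 + z2^2) • (1 : HT →L[ℂ] HT) + (z1*z2) • (S) := by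
  simp only [mul_add, add_mul, smul_mul_assoc, mul_smul_comm, smul_smul, one_mul, mul_one,
    hTT', smul_add]
  module

include hTT' hT'T in
lemma CB_eq : (C) * (B) = (z1^2 + z2^2) • (1 : HT →L[ℂ] HT) + (z1*z2) • (S) := by
  simp only [mul_add, add_mul, smul_mul_assoc, mul_smul_comm, smul_smul, one_mul, mul_one,
    hT'T, smul_add]
  module

include hTT' hT'T in
lemma comm_BS : Commute (B) (S) := by
  unfold Commute SemiconjBy
  simp only [mul_add, add_mul, smul_mul_assoc, mul_smul_comm, one_mul, mul_one, hTT', hT'T]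
  module

include hTT' hT'T in
lemma comm_TS : Commute T (S) := by
  unfold Commute SemiconjBy
  simp only [mul_add, add_mul, hTT', hT'T]
include hTT' hT'T in
lemma comm_T'S : Commute (adjoint T) (S) := by
  unfold Commute SemiconjBy
  simp only [mul_add, add_mul, hTT', hT'T]
include hTT' hT'T in
lemma comm_CS : Commute (C) (S) := by
  unfold Commute SemiconjBy
  simp only [mul_add, add_mul, smul_mul_assoc, mul_smul_comm, one_mul, mul_one, hTT', hT'T]
  module
end

section
set_option linter.unusedSectionVars false
variable (T : HT →L[ℂ] HT)
  (hTT' : T * adjoint T = 1) (hT'T : adjoint T * T = 1) (z0 z1 z2 : ℂ)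

local notation "B" => z1 • T + z2 • (1 : HT →L[ℂ] HT)
local notation "C" => z1 • (adjoint T) + z2 • (1 : HT →L[ℂ] HT)
local notation "S" => T + adjoint T

include hTT' hT'T in
lemma E_unit (hSA : IsSelfAdjoint (S)) (hn : ‖(S)‖ ≤ 2)
    (hsym : ∀ x : ℝ, -1 ≤ x → x ≤ 1 → z0 ^ 2 - z1 ^ 2 - z2 ^ 2 - 2 * z1 * z2 * (x : ℂ) ≠ 0) :
    IsUnit (z0^2 • (1 : HT →L[ℂ] HT) - (B) * (C)) := by
  have hE : z0^2 • (1 : HT →L[ℂ] HT) - (B) * (C)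
      = (z0^2 - z1^2 - z2^2) • (1 : HT →L[ℂ] HT) - (z1*z2) • (S) := by
    rw [BC_eq T hTT' hT'T z1 z2]; module
  rw [hE]
  by_cases hw : z1 * z2 = 0
  · have hc : z0^2 - z1^2 - z2^2 ≠ 0 := by
      have := hsym 0 (by norm_num) (by norm_num)
      simpa [hw] using this
    rw [hw, zero_smul, sub_zero, ← Algebra.algebraMap_eq_smul_one]
    exact (isUnit_iff_ne_zero.mpr hc).map (algebraMap ℂ (HT →L[ℂ] HT))
  · set c := z0^2 - z1^2 - z2^2 with hcdef
    have key : IsUnit ((c / (z1*z2)) • (1 : HT →L[ℂ] HT) - (S)) := by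
      apply isUnit_smul_sub _ hSA hn
      intro x hx1 hx2 hxe
      refine hsym (x/2) (by linarith) (by linarith) ?_
      have hc : c = (z1*z2) * x := by
        field_simp at hxe
        rw [div_eq_iff hw] at hxe; rw [hxe]; ring
      push_cast
      rw [hc]; ring
    have hfac : c • (1 : HT →L[ℂ] HT) - (z1*z2) • (S)
        = ((z1*z2) • (1 : HT →L[ℂ] HT)) * ((c / (z1*z2)) • (1 : HT →L[ℂ] HT) - (S)) := by
      rw [mul_sub, smul_mul_assoc, one_mul, smul_mul_assoc, one_mul, smul_smul,
        mul_div_cancel₀ _ hw]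
    rw [hfac]
    refine IsUnit.mul ?_ key
    rw [← Algebra.algebraMap_eq_smul_one]
    exact (isUnit_iff_ne_zero.mpr hw).map (algebraMap ℂ (HT →L[ℂ] HT))
end

section
set_option linter.unusedSectionVars false
variable (T : HT →L[ℂ] HT)
  (hTT' : T * adjoint T = 1) (hT'T : adjoint T * T = 1) (z0 z1 z2 : ℂ)

local notation "B" => z1 • T + z2 • (1 : HT →L[ℂ] HT)
local notation "C" => z1 • (adjoint T) + z2 • (1 : HT →L[ℂ] HT)
local notation "S" => T + adjoint T
include hTT' hT'T in
set_option maxHeartbeats 2000000 in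
lemma A_unit (hE : IsUnit (z0^2 • (1 : HT →L[ℂ] HT) - (B) * (C))) :
    IsUnit ((((z0 • (1 : HT →L[ℂ] HT)).coprod ((B))).prod
          (((C)).coprod (z0 • (1 : HT →L[ℂ] HT))) : HT × HT →L[ℂ] HT × HT)) := by
  set A : HT × HT →L[ℂ] HT × HT := ((z0 • (1 : HT →L[ℂ] HT)).coprod ((B))).prod
          (((C)).coprod (z0 • (1 : HT →L[ℂ] HT))) with hAdef
  set E : HT →L[ℂ] HT := z0^2 • (1 : HT →L[ℂ] HT) - (B) * (C) with hEdef
  set F : HT →L[ℂ] HT := ↑hE.unit⁻¹ with hFdef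
  have hEF : E * F = 1 := hE.mul_val_inv
  have hFE : F * E = 1 := hE.val_inv_mul
  have hBE : Commute (B) E := by
    rw [hEdef]
    refine Commute.sub_right (Commute.smul_right (Commute.one_right _) _) ?_
    rw [BC_eq T hTT' hT'T z1 z2]
    exact Commute.add_right (Commute.smul_right (Commute.one_right _) _)
      (Commute.smul_right (comm_BS T hTT' hT'T z1 z2) _)
  have hCE : Commute (C) E := by
    rw [hEdef]
    refine Commute.sub_right (Commute.smul_right (Commute.one_right _) _) ?_
    rw [BC_eq T hTT' hT'T z1 z2]
    exact Commute.add_right (Commute.smul_right (Commute.one_right _) _)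
      (Commute.smul_right (comm_CS T hTT' hT'T z1 z2) _)
  have hBF : Commute (B) F := by
    rw [hFdef]
    exact Commute.units_inv_right (by rwa [hE.unit_spec])
  have hCF : Commute (C) F := by
    rw [hFdef]
    exact Commute.units_inv_right (by rwa [hE.unit_spec])
  set N : HT × HT →L[ℂ] HT × HT :=
    ((z0 • F).coprod (-((B) * F))).prod ((-((C) * F)).coprod (z0 • F)) with hNdef
  have hCB : (C) * (B) = (B) * (C) := by
    rw [BC_eq T hTT' hT'T z1 z2, CB_eq T hTT' hT'T z1 z2]
  have hTE : Commute T E := by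
    rw [hEdef]
    refine Commute.sub_right (Commute.smul_right (Commute.one_right _) _) ?_
    rw [BC_eq T hTT' hT'T z1 z2]
    exact Commute.add_right (Commute.smul_right (Commute.one_right _) _)
      (Commute.smul_right (comm_TS T hTT' hT'T) _)
  have hT'E : Commute (adjoint T) E := by
    rw [hEdef]
    refine Commute.sub_right (Commute.smul_right (Commute.one_right _) _) ?_
    rw [BC_eq T hTT' hT'T z1 z2]
    exact Commute.add_right (Commute.smul_right (Commute.one_right _) _)
      (Commute.smul_right (comm_T'S T hTT' hT'T) _)
  have hFT : ∀ v : HT, F (T v) = T (F v) := by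
    intro v
    have hc : Commute T F := Commute.units_inv_right (by rwa [hE.unit_spec])
    have := ContinuousLinearMap.ext_iff.mp hc.symm v
    simpa [mul_apply_eq_comp] using this
  have hFT' : ∀ v : HT, F ((adjoint T) v) = (adjoint T) (F v) := by
    intro v
    have hc : Commute (adjoint T) F := Commute.units_inv_right (by rwa [hE.unit_spec])
    have := ContinuousLinearMap.ext_iff.mp hc.symm v
    simpa [mul_apply_eq_comp] using this
  have key1 : ∀ v : HT, z0^2 • F v - (z1*z1) • T ((adjoint T) (F v)) - (z1*z2) • T (F v)
      - (z1*z2) • ((adjoint T) (F v)) - (z2*z2) • F v = v := by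
    intro v
    have h1 : (E * F) v = v := by rw [hEF]; rfl
    refine Eq.trans ?_ h1
    simp only [hEdef, mul_apply_eq_comp, sub_apply, smul_apply, one_apply_eq_self, add_apply, map_add, map_smul]
    module
  have key2 : ∀ v : HT, z0^2 • F v - (z1*z1) • (adjoint T) (T (F v)) - (z1*z2) • T (F v)
      - (z1*z2) • ((adjoint T) (F v)) - (z2*z2) • F v = v := by
    intro v
    have h1 : ((z0^2 • (1 : HT →L[ℂ] HT) - (C) * (B)) * F) v = v := by
      rw [hCB, ← hEdef, hEF]; rfl
    refine Eq.trans ?_ h1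
    simp only [mul_apply_eq_comp, sub_apply, smul_apply, one_apply_eq_self, add_apply, map_add, map_smul]
    module
  have hAN : A * N = 1 := by
    refine ContinuousLinearMap.ext fun x => ?_
    obtain ⟨u, w⟩ := x
    simp only [hAdef, hNdef, mul_apply_eq_comp, prod_apply, coprod_apply, smul_apply, neg_apply,
      one_apply_eq_self, Prod.mk.injEq, map_add, map_smul, map_neg, add_apply, one_def, id_apply]
    refine ⟨Eq.trans ?_ (key1 u), Eq.trans ?_ (key2 w)⟩
    · module
    · module
  have hNA : N * A = 1 := by
    refine ContinuousLinearMap.ext fun x => ?_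
    obtain ⟨u, w⟩ := x
    simp only [hAdef, hNdef, mul_apply_eq_comp, prod_apply, coprod_apply, smul_apply, neg_apply,
      one_apply_eq_self, Prod.mk.injEq, map_add, map_smul, map_neg, add_apply, one_def, id_apply,
      hFT, hFT']
    refine ⟨Eq.trans ?_ (key1 u), Eq.trans ?_ (key2 w)⟩
    · module
    · module
  exact ⟨⟨A, N, hAN, hNA⟩, rfl⟩
end

section
variable (ω : ℂ) (hω : ‖ω‖ = 1)

noncomputable def ee (n : ℤ) : HT := lp.single 2 n (ω ^ (-n))

include hω in
lemma norm_ee (n : ℤ) : ‖ee ω n‖ = 1 := by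
  have := lp.norm_single (p := 2) (E := fun _ : ℤ => ℂ) (by norm_num) n (ω ^ (-n))
  simp only [ee]
  rw [this, norm_zpow, hω, one_zpow]

noncomputable def vv (N : ℕ) : HT := ∑ n ∈ Finset.Icc (-(N:ℤ)) N, ee ω n

include hω in
lemma norm_vv_sq (N : ℕ) : ‖vv ω N‖ ^ (2:ℝ) = 2 * N + 1 := by
  have h := lp.norm_sum_single (p := 2) (E := fun _ : ℤ => ℂ) two_pos'
    (fun n => ω ^ (-n)) (Finset.Icc (-(N:ℤ)) N)
  have h2 : ∀ n ∈ Finset.Icc (-(N:ℤ)) N, ‖ω ^ (-n)‖ ^ ((2:ℝ≥0∞)).toReal = 1 := by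
    intro n _
    rw [norm_zpow, hω, one_zpow, Real.one_rpow]
  rw [Finset.sum_congr rfl h2, Finset.sum_const] at h
  have hcard : (Finset.Icc (-(N:ℤ)) N).card = 2 * N + 1 := by
    rw [Int.card_Icc]
    omega
  rw [hcard] at h
  have : (vv ω N : HT) = ∑ n ∈ Finset.Icc (-(N:ℤ)) N, lp.single 2 n (ω ^ (-n)) := rfl
  rw [this]
  have h' : ‖∑ n ∈ Finset.Icc (-(N:ℤ)) N, (lp.single 2 n (ω ^ (-n)) : HT)‖ ^ ((2:ℝ≥0∞)).toReal
      = (2 * N + 1 : ℕ) • (1:ℝ) := h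
  rw [show ((2:ℝ≥0∞)).toReal = (2:ℝ) by norm_num] at h'
  rw [h']
  push_cast
  ring
end

section
set_option linter.unusedSectionVars false
variable (T : HT →L[ℂ] HT) (hT : ∀ (f : HT) (n : ℤ), T f n = f (n - 1))
  (hTadj : ∀ (n : ℤ) (a : ℂ), adjoint T (lp.single 2 n a) = lp.single 2 (n-1) a)
  (ω : ℂ) (hω : ‖ω‖ = 1)

include hω in
lemma omega_ne : ω ≠ 0 := by intro h; rw [h] at hω; simp at hω

include hω in
lemma omega_conj : (starRingEnd ℂ) ω * ω = 1 := by
  rw [mul_comm, Complex.mul_conj]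
  norm_cast
  rw [Complex.normSq_eq_norm_sq, hω]; norm_num

include hT hω in
lemma T_ee (n : ℤ) : T (ee ω n) = ω • ee ω (n+1) := by
  have hTs : T (lp.single 2 n (ω ^ (-n))) = lp.single 2 (n+1) (ω ^ (-n)) := by
    apply lp.ext
    funext m
    rw [hT]
    by_cases h : m = n + 1
    · subst h
      simp [lp.single_apply_self, lp.single_apply]
    · rw [lp.single_apply_ne _ _ _ h, lp.single_apply_ne]
      omega
  simp only [ee, hTs, ← lp.single_smul]
  congr 1
  rw [smul_eq_mul, ← zpow_one_add₀ (omega_ne ω hω)]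
  congr 1; ring

include hTadj hω in
lemma adjT_ee (n : ℤ) : adjoint T (ee ω n) = (starRingEnd ℂ) ω • ee ω (n-1) := by
  simp only [ee, hTadj, ← lp.single_smul]
  congr 1
  rw [smul_eq_mul]
  have : ω ^ (-(n-1)) = ω * ω ^ (-n) := by
    rw [← zpow_one_add₀ (omega_ne ω hω)]; congr 1; ring
  rw [this, ← mul_assoc, omega_conj ω hω, one_mul]

include hT hω in
lemma T_vv (N : ℕ) : T (vv ω N) = ω • vv ω N + ω • ee ω (N+1) - ω • ee ω (-(N:ℤ)) := by
  have h1 : T (vv ω N) = ∑ n ∈ Finset.Icc (-(N:ℤ)) N, ω • ee ω (n+1) := by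
    rw [vv, map_sum]
    exact Finset.sum_congr rfl fun n _ => T_ee T hT ω hω n
  have h2 : ∑ n ∈ Finset.Icc (-(N:ℤ)) N, ω • ee ω (n+1)
      = ∑ m ∈ Finset.Icc (-(N:ℤ)+1) (N+1), ω • ee ω m := by
    rw [← Finset.map_add_right_Icc _ _ 1, Finset.sum_map]
    rfl
  have hins1 : Finset.Icc (-(N:ℤ)+1) ((N:ℤ)+1)
      = insert ((N:ℤ)+1) (Finset.Icc (-(N:ℤ)+1) N) := by
    ext m; simp only [Finset.mem_Icc, Finset.mem_insert]; omega
  have hins2 : Finset.Icc (-(N:ℤ)) (N:ℤ)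
      = insert (-(N:ℤ)) (Finset.Icc (-(N:ℤ)+1) N) := by
    ext m; simp only [Finset.mem_Icc, Finset.mem_insert]; omega
  have hnm1 : ((N:ℤ)+1) ∉ Finset.Icc (-(N:ℤ)+1) (N:ℤ) := by
    simp only [Finset.mem_Icc]; omega
  have hnm2 : (-(N:ℤ)) ∉ Finset.Icc (-(N:ℤ)+1) (N:ℤ) := by
    simp only [Finset.mem_Icc]; omega
  rw [h1, h2, hins1, Finset.sum_insert hnm1]
  have hvv : vv ω N = ee ω (-(N:ℤ)) + ∑ m ∈ Finset.Icc (-(N:ℤ)+1) N, ee ω m := by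
    rw [vv, hins2, Finset.sum_insert hnm2]
  rw [hvv]
  simp only [smul_add, Finset.smul_sum]
  abel

include hTadj hω in
lemma adjT_vv (N : ℕ) : adjoint T (vv ω N) = (starRingEnd ℂ) ω • vv ω N
    + (starRingEnd ℂ) ω • ee ω (-(N:ℤ)-1) - (starRingEnd ℂ) ω • ee ω N := by
  have h1 : adjoint T (vv ω N) = ∑ n ∈ Finset.Icc (-(N:ℤ)) N, (starRingEnd ℂ) ω • ee ω (n-1) := by
    rw [vv, map_sum]
    exact Finset.sum_congr rfl fun n _ => adjT_ee T hTadj ω hω n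
  have h2 : ∑ n ∈ Finset.Icc (-(N:ℤ)) N, (starRingEnd ℂ) ω • ee ω (n-1)
      = ∑ m ∈ Finset.Icc (-(N:ℤ)-1) ((N:ℤ)-1), (starRingEnd ℂ) ω • ee ω m := by
    rw [show (-(N:ℤ)-1) = -(N:ℤ) + (-1) by ring, show ((N:ℤ)-1) = (N:ℤ) + (-1) by ring,
      ← Finset.map_add_right_Icc _ _ (-1), Finset.sum_map]
    rfl
  have hins1 : Finset.Icc (-(N:ℤ)-1) ((N:ℤ)-1)
      = insert (-(N:ℤ)-1) (Finset.Icc (-(N:ℤ)) ((N:ℤ)-1)) := by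
    ext m; simp only [Finset.mem_Icc, Finset.mem_insert]; omega
  have hins2 : Finset.Icc (-(N:ℤ)) (N:ℤ)
      = insert (N:ℤ) (Finset.Icc (-(N:ℤ)) ((N:ℤ)-1)) := by
    ext m; simp only [Finset.mem_Icc, Finset.mem_insert]; omega
  have hnm1 : (-(N:ℤ)-1) ∉ Finset.Icc (-(N:ℤ)) ((N:ℤ)-1) := by
    simp only [Finset.mem_Icc]; omega
  have hnm2 : ((N:ℤ)) ∉ Finset.Icc (-(N:ℤ)) ((N:ℤ)-1) := by
    simp only [Finset.mem_Icc]; omega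
  rw [h1, h2, hins1, Finset.sum_insert hnm1]
  have hvv : vv ω N = ee ω (N:ℤ) + ∑ m ∈ Finset.Icc (-(N:ℤ)) ((N:ℤ)-1), ee ω m := by
    rw [vv, hins2, Finset.sum_insert hnm2]
  rw [hvv]
  simp only [smul_add, Finset.smul_sum]
  abel
end

section
set_option linter.unusedSectionVars false
set_option maxHeartbeats 2000000
variable (T : HT →L[ℂ] HT) (hT : ∀ (f : HT) (n : ℤ), T f n = f (n - 1))
  (hTadj : ∀ (n : ℤ) (a : ℂ), adjoint T (lp.single 2 n a) = lp.single 2 (n-1) a)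
  (z0 z1 z2 p q ω : ℂ) (hω : ‖ω‖ = 1)

include hT hTadj hω in
lemma A_not_unit (hpq : p ≠ 0 ∨ q ≠ 0)
    (h1 : z0*p + (z1*ω + z2)*q = 0)
    (h2 : (z1*(starRingEnd ℂ) ω + z2)*p + z0*q = 0) :
    ¬ IsUnit ((((z0 • (1 : HT →L[ℂ] HT)).coprod (z1 • T + z2 • (1 : HT →L[ℂ] HT))).prod
          ((z1 • (adjoint T) + z2 • (1 : HT →L[ℂ] HT)).coprod
            (z0 • (1 : HT →L[ℂ] HT))) : HT × HT →L[ℂ] HT × HT)) := by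
  intro hU
  set A : HT × HT →L[ℂ] HT × HT :=
    (((z0 • (1 : HT →L[ℂ] HT)).coprod (z1 • T + z2 • (1 : HT →L[ℂ] HT))).prod
          ((z1 • (adjoint T) + z2 • (1 : HT →L[ℂ] HT)).coprod
            (z0 • (1 : HT →L[ℂ] HT)))) with hAdef
  set G : HT × HT →L[ℂ] HT × HT := ↑hU.unit⁻¹ with hGdef
  have hGA : ∀ y : HT × HT, G (A y) = y := by
    intro y
    have : (G * A) y = (1 : HT × HT →L[ℂ] HT × HT) y := by rw [hU.val_inv_mul]
    simpa [mul_apply_eq_comp] using this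
  set m : ℝ := max ‖p‖ ‖q‖ with hmdef
  have hm : 0 < m := by
    rcases hpq with h | h
    · exact lt_max_of_lt_left (norm_pos_iff.mpr h)
    · exact lt_max_of_lt_right (norm_pos_iff.mpr h)
  set K : ℝ := 2*‖q*z1*ω‖ + 2*‖p*z1*(starRingEnd ℂ) ω‖ with hKdef
  have hbound : ∀ N : ℕ, m * ‖vv ω N‖ ≤ ‖G‖ * K := by
    intro N
    set v : HT := vv ω N with hvdef
    set u : HT × HT := (p • v, q • v) with hudef
    have hcomp1 : z0 • (p • v) + (z1 • T + z2 • (1 : HT →L[ℂ] HT)) (q • v)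
        = (q*z1*ω) • ee ω (N+1) - (q*z1*ω) • ee ω (-(N:ℤ)) := by
      simp only [add_apply, smul_apply, one_apply_eq_self, map_smul]
      rw [hvdef, T_vv T hT ω hω N]
      have hc : z0*p + z1*ω*q + z2*q = 0 := by linear_combination h1
      match_scalars
      · linear_combination hc
      · ring
      · ring
    have hcomp2 : (z1 • (adjoint T) + z2 • (1 : HT →L[ℂ] HT)) (p • v) + z0 • (q • v)
        = (p*z1*(starRingEnd ℂ) ω) • ee ω (-(N:ℤ)-1)
          - (p*z1*(starRingEnd ℂ) ω) • ee ω (N:ℤ) := by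
      simp only [add_apply, smul_apply, one_apply_eq_self, map_smul]
      rw [hvdef, adjT_vv T hTadj ω hω N]
      have hc : z1*(starRingEnd ℂ) ω*p + z2*p + z0*q = 0 := by linear_combination h2
      match_scalars
      · linear_combination hc
      · ring
      · ring
    have hAu : A u = ((q*z1*ω) • ee ω (N+1) - (q*z1*ω) • ee ω (-(N:ℤ)),
        (p*z1*(starRingEnd ℂ) ω) • ee ω (-(N:ℤ)-1)
          - (p*z1*(starRingEnd ℂ) ω) • ee ω (N:ℤ)) := by
      rw [hAdef, hudef]
      simp only [prod_apply, coprod_apply, smul_apply, one_apply_eq_self]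
      rw [hcomp1, hcomp2]
    have hnorm1 : ‖(q*z1*ω) • ee ω ((N:ℤ)+1) - (q*z1*ω) • ee ω (-(N:ℤ))‖ ≤ 2*‖q*z1*ω‖ := by
      calc ‖(q*z1*ω) • ee ω ((N:ℤ)+1) - (q*z1*ω) • ee ω (-(N:ℤ))‖
          ≤ ‖(q*z1*ω) • ee ω ((N:ℤ)+1)‖ + ‖(q*z1*ω) • ee ω (-(N:ℤ))‖ := norm_sub_le _ _
        _ = ‖q*z1*ω‖ * ‖ee ω ((N:ℤ)+1)‖ + ‖q*z1*ω‖ * ‖ee ω (-(N:ℤ))‖ := by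
            rw [norm_smul, norm_smul]
        _ = 2*‖q*z1*ω‖ := by rw [norm_ee ω hω, norm_ee ω hω]; ring
    have hnorm2 : ‖(p*z1*(starRingEnd ℂ) ω) • ee ω (-(N:ℤ)-1)
        - (p*z1*(starRingEnd ℂ) ω) • ee ω (N:ℤ)‖ ≤ 2*‖p*z1*(starRingEnd ℂ) ω‖ := by
      calc ‖(p*z1*(starRingEnd ℂ) ω) • ee ω (-(N:ℤ)-1) - (p*z1*(starRingEnd ℂ) ω) • ee ω (N:ℤ)‖
          ≤ ‖(p*z1*(starRingEnd ℂ) ω) • ee ω (-(N:ℤ)-1)‖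
            + ‖(p*z1*(starRingEnd ℂ) ω) • ee ω (N:ℤ)‖ := norm_sub_le _ _
        _ = ‖p*z1*(starRingEnd ℂ) ω‖ * ‖ee ω (-(N:ℤ)-1)‖
            + ‖p*z1*(starRingEnd ℂ) ω‖ * ‖ee ω (N:ℤ)‖ := by rw [norm_smul, norm_smul]
        _ = 2*‖p*z1*(starRingEnd ℂ) ω‖ := by rw [norm_ee ω hω, norm_ee ω hω]; ring
    have hAuK : ‖A u‖ ≤ K := by
      rw [hAu, Prod.norm_def]
      rw [hKdef]
      have k1 : (0:ℝ) ≤ 2*‖q*z1*ω‖ := by positivity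
      have k2 : (0:ℝ) ≤ 2*‖p*z1*(starRingEnd ℂ) ω‖ := by positivity
      apply max_le
      · push_cast at hnorm1 ⊢
        linarith
      · push_cast at hnorm2 ⊢
        linarith
    have hunorm : ‖u‖ = m * ‖v‖ := by
      rw [hudef, Prod.norm_def, hmdef]
      simp only [norm_smul]
      rw [max_mul_of_nonneg _ _ (norm_nonneg v)]
    calc m * ‖vv ω N‖ = ‖u‖ := (hunorm).symm
      _ = ‖G (A u)‖ := by rw [hGA u]
      _ ≤ ‖G‖ * ‖A u‖ := le_opNorm G (A u)
      _ ≤ ‖G‖ * K := by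
          exact mul_le_mul_of_nonneg_left hAuK (norm_nonneg G)
  -- contradiction
  set R : ℝ := ‖G‖ * K / m with hRdef
  have hvR : ∀ N : ℕ, ‖vv ω N‖ ≤ R := by
    intro N
    rw [hRdef, le_div_iff₀ hm]
    calc ‖vv ω N‖ * m = m * ‖vv ω N‖ := by ring
      _ ≤ ‖G‖ * K := hbound N
  obtain ⟨N, hN⟩ := exists_nat_gt (R^(2:ℝ))
  have hRnn : 0 ≤ R := le_trans (norm_nonneg _) (hvR 0)
  have hsq : ‖vv ω N‖ ^ (2:ℝ) ≤ R ^ (2:ℝ) :=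
    Real.rpow_le_rpow (norm_nonneg _) (hvR N) (by norm_num)
  rw [norm_vv_sq ω hω N] at hsq
  have : (N:ℝ) ≤ 2*N+1 := by push_cast; linarith [Nat.cast_nonneg (α := ℝ) N]
  linarith
end


set_option maxHeartbeats 2000000

/-- The 2×2 operator matrix `[[z0, z1 T + z2],[z1 T* + z2, z0]]` on `H ⊕ H` is invertible
iff `z0² − z1² − z2² − 2 z1 z2 x ≠ 0` for every `x ∈ [−1, 1]`, where `T` is the bilateral
shift. -/
theorem stmt_0 (T : HT →L[ℂ] HT) (hT : ∀ (f : HT) (n : ℤ), T f n = f (n - 1))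
    (z0 z1 z2 : ℂ) :
    IsUnit
      ((((z0 • (1 : HT →L[ℂ] HT)).coprod (z1 • T + z2 • (1 : HT →L[ℂ] HT))).prod
          ((z1 • (adjoint T) + z2 • (1 : HT →L[ℂ] HT)).coprod
            (z0 • (1 : HT →L[ℂ] HT))) : HT × HT →L[ℂ] HT × HT)) ↔
      ∀ x : ℝ, -1 ≤ x → x ≤ 1 → z0 ^ 2 - z1 ^ 2 - z2 ^ 2 - 2 * z1 * z2 * (x : ℂ) ≠ 0 := by
  have hTT' : T * adjoint T = 1 := T_adj_T T hT
  have hT'T : adjoint T * T = 1 := adj_T_T T hT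
  constructor
  · intro hU
    by_contra hnot
    push_neg at hnot
    obtain ⟨x, hx1, hx2, heq⟩ := hnot
    set ω : ℂ := (x:ℂ) + (Real.sqrt (1 - x^2) : ℝ) * Complex.I with hωdef
    have hx1x : (0:ℝ) ≤ 1 - x^2 := by nlinarith
    have hre : ω.re = x := by simp [hωdef]
    have him : ω.im = Real.sqrt (1 - x^2) := by simp [hωdef]
    have hω : ‖ω‖ = 1 := by
      rw [Complex.norm_def, Complex.normSq_apply, hre, him,
        Real.mul_self_sqrt hx1x, show x * x + (1 - x^2) = 1 by ring, Real.sqrt_one]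
    have hc1 : ω * (starRingEnd ℂ) ω = 1 := by
      rw [Complex.mul_conj]
      rw [Complex.normSq_eq_norm_sq, hω]
      norm_num
    have hc2 : ω + (starRingEnd ℂ) ω = 2*(x:ℂ) := by
      rw [Complex.add_conj, hre]
      push_cast
      ring
    have hdet : z0^2 = (z1*ω+z2)*(z1*(starRingEnd ℂ) ω+z2) := by
      linear_combination heq - z1^2*hc1 - z1*z2*hc2
    have hTadj : ∀ (n : ℤ) (a : ℂ), adjoint T (lp.single 2 n a) = lp.single 2 (n-1) a :=
      adj_single T hT
    by_cases hz0 : z0 = 0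
    · by_cases hb : z1*ω+z2 = 0
      · exact A_not_unit T hT hTadj z0 z1 z2 0 1 ω hω (Or.inr one_ne_zero)
          (by rw [hb, hz0]; ring) (by rw [hz0]; ring) hU
      · have hc' : z1*(starRingEnd ℂ) ω+z2 = 0 := by
          rcases mul_eq_zero.mp (by rw [← hdet, hz0]; ring : (z1*ω+z2)*(z1*(starRingEnd ℂ) ω+z2) = 0) with h | h
          · exact absurd h hb
          · exact h
        exact A_not_unit T hT hTadj z0 z1 z2 1 0 ω hω (Or.inl one_ne_zero)
          (by rw [hz0]; ring) (by rw [hc']; ring) hU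
    · exact A_not_unit T hT hTadj z0 z1 z2 (z1*ω+z2) (-z0) ω hω
        (Or.inr (neg_ne_zero.mpr hz0))
        (by ring) (by linear_combination -hdet) hU
  · intro hsym
    have hSA : IsSelfAdjoint (T + adjoint T) := by
      rw [IsSelfAdjoint, star_add, star_eq_adjoint, star_eq_adjoint, adjoint_adjoint, add_comm]
    have hn : ‖T + adjoint T‖ ≤ 2 := by
      calc ‖T + adjoint T‖ ≤ ‖T‖ + ‖adjoint T‖ := norm_add_le _ _
        _ ≤ 1 + 1 := add_le_add (norm_T_le T hT) (norm_adjT_le T hT)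
        _ = 2 := by norm_num
    exact A_unit T hTT' hT'T z0 z1 z2 (E_unit T hTT' hT'T z0 z1 z2 hSA hn hsym)
end

section
/- Let T be the bilateral shift on L²(𝕋) and let R(z) be the 4×4 operator matrix [[z0, z1T+z2, z3, 0],[z1T*+z2, z0, 0, z3],[z3, 0, z0, z1T+z2],[0, z3, z1T*+z2, z0]] acting on (L²(𝕋))⁴. Then R(z) is invertible if and only if for every real x with −1 ≤ x ≤ 1, both (z0 − z3)² − z1² − z2² − 2z1z2x ≠ 0 and (z0 + z3)² − z1² − z2² − 2z1z2x ≠ 0. -/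
open ContinuousLinearMap
set_option synthInstance.maxHeartbeats 1000000
set_option maxHeartbeats 1000000
open Complex
open scoped ENNReal

/-- The 2×2 operator block matrix `[[A, B],[C, D]]` acting on `H ⊕ H`. -/
noncomputable def blockCLM {H : Type*} [NormedAddCommGroup H] [NormedSpace ℂ H]
    (A B C D : H →L[ℂ] H) : H × H →L[ℂ] H × H :=
  (A.coprod B).prod (C.coprod D)

namespace ShiftAux

local notation "⟪" x ", " y "⟫" => @inner ℂ _ _ x y

noncomputable def shiftFun (k : ℤ) (f : HT) : ∀ _ : ℤ, ℂ := fun n => f (n - k)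

lemma memℓp_shift (k : ℤ) (f : HT) : Memℓp (shiftFun k f) 2 := by
  apply memℓp_gen
  have h := (lp.memℓp f).summable (by norm_num : 0 < (2:ℝ≥0∞).toReal)
  exact ((Equiv.subRight k).summable_iff
    (f := fun m : ℤ => ‖(f : ∀ _ : ℤ, ℂ) m‖ ^ (2:ℝ≥0∞).toReal)).2 h

noncomputable def shiftLM (k : ℤ) : HT →ₗ[ℂ] HT where
  toFun f := ⟨shiftFun k f, memℓp_shift k f⟩
  map_add' f g := by
    apply lp.ext; funext n
    simp [shiftFun]
    rfl
  map_smul' c f := by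
    apply lp.ext; funext n
    simp [shiftFun]

lemma norm_shiftLM (k : ℤ) (f : HT) : ‖shiftLM k f‖ = ‖f‖ := by
  have h1 : ‖shiftLM k f‖ ^ 2 = ‖f‖ ^ 2 := by
    rw [@norm_sq_eq_re_inner ℂ, @norm_sq_eq_re_inner ℂ, lp.inner_eq_tsum, lp.inner_eq_tsum]
    congr 1
    exact (Equiv.subRight k).tsum_eq (fun m => ⟪(f : ∀ _ : ℤ, ℂ) m, (f : ∀ _ : ℤ, ℂ) m⟫)
  rw [← Real.sqrt_sq (norm_nonneg (shiftLM k f)), h1, Real.sqrt_sq (norm_nonneg f)]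

noncomputable def shiftCLM (k : ℤ) : HT →L[ℂ] HT :=
  (shiftLM k).mkContinuous 1 (fun f => by rw [norm_shiftLM]; simp)

lemma shiftCLM_apply (k : ℤ) (f : HT) (n : ℤ) : shiftCLM k f n = f (n - k) := rfl

lemma shift_mul_shift (k l : ℤ) : shiftCLM k * shiftCLM l = shiftCLM (k + l) := by
  ext f n
  show shiftCLM k (shiftCLM l f) n = _
  rw [shiftCLM_apply, shiftCLM_apply, shiftCLM_apply]
  have : n - k - l = n - (k + l) := by ring
  rw [this]

lemma norm_shiftCLM (k : ℤ) (f : HT) : ‖shiftCLM k f‖ = ‖f‖ := norm_shiftLM k f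

lemma norm_shiftCLM_le (k : ℤ) : ‖shiftCLM k‖ ≤ 1 :=
  opNorm_le_bound _ (by norm_num) (fun f => by rw [norm_shiftCLM, one_mul])

lemma shift_zero : shiftCLM 0 = 1 := by
  ext f n
  rw [shiftCLM_apply]
  simp

lemma adjoint_shiftCLM (k : ℤ) : adjoint (shiftCLM k) = shiftCLM (-k) := by
  symm
  rw [eq_adjoint_iff]
  intro x y
  rw [lp.inner_eq_tsum, lp.inner_eq_tsum]
  rw [← (Equiv.addRight k).tsum_eq
    (fun n : ℤ => ⟪(x : ∀ _ : ℤ, ℂ) n, (shiftCLM k y : ∀ _ : ℤ, ℂ) n⟫)]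
  congr 1
  funext n
  simp only [Equiv.coe_addRight, shiftCLM_apply]
  have h1 : n - -k = n + k := by ring
  have h2 : n + k - k = n := by ring
  rw [h1, h2]

end ShiftAux
namespace BlockAux

variable {H : Type*} [NormedAddCommGroup H] [NormedSpace ℂ H]

lemma blockCLM_apply (A B C D : H →L[ℂ] H) (x : H × H) :
    blockCLM A B C D x = (A x.1 + B x.2, C x.1 + D x.2) := rfl

lemma blockCLM_mul (A B C D A' B' C' D' : H →L[ℂ] H) :
    blockCLM A B C D * blockCLM A' B' C' D' =
      blockCLM (A * A' + B * C') (A * B' + B * D') (C * A' + D * C') (C * B' + D * D') := by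
  ext x <;>
  simp [blockCLM_apply, mul_apply] <;> abel

lemma blockCLM_add (A B C D A' B' C' D' : H →L[ℂ] H) :
    blockCLM A B C D + blockCLM A' B' C' D' =
      blockCLM (A + A') (B + B') (C + C') (D + D') := by
  ext x <;> simp [blockCLM_apply] <;> abel

lemma blockCLM_sub (A B C D A' B' C' D' : H →L[ℂ] H) :
    blockCLM A B C D - blockCLM A' B' C' D' =
      blockCLM (A - A') (B - B') (C - C') (D - D') := by
  ext x <;> simp [blockCLM_apply] <;> abel

lemma blockCLM_one : (1 : H × H →L[ℂ] H × H) = blockCLM 1 0 0 1 := by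
  ext x <;> simp [blockCLM_apply]

lemma blockCLM_smul_one (c : ℂ) :
    c • (1 : H × H →L[ℂ] H × H) = blockCLM (c • 1) 0 0 (c • 1) := by
  ext x <;> simp [blockCLM_apply]

end BlockAux

namespace BlockAux2
variable {H : Type*} [NormedAddCommGroup H] [NormedSpace ℂ H]
open BlockAux

lemma unit_mul_left_iff {R : Type*} [Monoid R] {u : R} (hu : IsUnit u) (x : R) :
    IsUnit (u * x) ↔ IsUnit x := by
  rw [← hu.unit_spec]; exact Units.isUnit_units_mul hu.unit x

lemma unit_mul_right_iff {R : Type*} [Monoid R] {u : R} (hu : IsUnit u) (x : R) :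
    IsUnit (x * u) ↔ IsUnit x := by
  rw [← hu.unit_spec]; exact Units.isUnit_mul_units x hu.unit

lemma isUnit_smul_iff {R : Type*} [Ring R] [Algebra ℂ R] {c : ℂ} (hc : c ≠ 0) (x : R) :
    IsUnit (c • x) ↔ IsUnit x := by
  have h1 : IsUnit (c • (1 : R)) := by
    refine isUnit_iff_exists.2 ⟨c⁻¹ • 1, ?_, ?_⟩ <;>
      rw [smul_mul_smul_comm] <;> simp [hc]
  have h2 : c • x = (c • (1:R)) * x := by rw [smul_mul_assoc, one_mul]
  rw [h2]
  exact unit_mul_left_iff h1 x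

lemma isUnit_diag_iff (A D : H →L[ℂ] H) :
    IsUnit (blockCLM A 0 0 D) ↔ IsUnit A ∧ IsUnit D := by
  constructor
  · intro h
    obtain ⟨u, hu⟩ := h
    have h1 : blockCLM A 0 0 D * ↑u⁻¹ = 1 := by rw [← hu]; exact u.mul_inv
    have h2 : (↑u⁻¹ : H × H →L[ℂ] H × H) * blockCLM A 0 0 D = 1 := by rw [← hu]; exact u.inv_mul
    constructor
    · refine isUnit_iff_exists.2 ⟨(fst ℂ H H).comp ((↑u⁻¹ : H × H →L[ℂ] H × H).comp (inl ℂ H H)), ?_, ?_⟩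
      · ext y
        have := congrArg (fun (T : H × H →L[ℂ] H × H) => (T (y, 0)).1) h1
        simpa [blockCLM_apply, mul_apply] using this
      · ext x
        have := congrArg (fun (T : H × H →L[ℂ] H × H) => (T (x, 0)).1) h2
        simpa [blockCLM_apply, mul_apply] using this
    · refine isUnit_iff_exists.2 ⟨(snd ℂ H H).comp ((↑u⁻¹ : H × H →L[ℂ] H × H).comp (inr ℂ H H)), ?_, ?_⟩
      · ext y
        have := congrArg (fun (T : H × H →L[ℂ] H × H) => (T (0, y)).2) h1
        simpa [blockCLM_apply, mul_apply] using this
      · ext x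
        have := congrArg (fun (T : H × H →L[ℂ] H × H) => (T (0, x)).2) h2
        simpa [blockCLM_apply, mul_apply] using this
  · rintro ⟨hA, hD⟩
    refine isUnit_iff_exists.2 ⟨blockCLM ↑hA.unit⁻¹ 0 0 ↑hD.unit⁻¹, ?_, ?_⟩ <;>
      rw [blockCLM_mul] <;>
      simp [hA.unit_spec, hD.unit_spec, ← blockCLM_one]

end BlockAux2

namespace BlockAux3
variable {H : Type*} [NormedAddCommGroup H] [NormedSpace ℂ H]
open BlockAux BlockAux2

lemma conj_unit_iff {R : Type*} [Monoid R] {P : R} (hP : IsUnit P) (M : R) :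
    IsUnit (P * M * P) ↔ IsUnit M := by
  rw [unit_mul_right_iff hP, unit_mul_left_iff hP]

/-- `[[A,B],[B,A]]` is a unit iff `A+B` and `A-B` are. -/
lemma isUnit_symm_iff (A B : H →L[ℂ] H) :
    IsUnit (blockCLM A B B A) ↔ IsUnit (A + B) ∧ IsUnit (A - B) := by
  set P : H × H →L[ℂ] H × H := blockCLM 1 1 1 (-1) with hPdef
  have hP : IsUnit P := by
    refine isUnit_iff_exists.2 ⟨(2:ℂ)⁻¹ • P, ?_, ?_⟩ <;>
    · rw [hPdef]
      ext x <;> simp [blockCLM_apply, mul_apply, smul_smul] <;> module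
  have key : P * blockCLM A B B A * P
      = blockCLM ((2:ℂ) • (A + B)) 0 0 ((2:ℂ) • (A - B)) := by
    rw [hPdef, blockCLM_mul, blockCLM_mul]
    ext x <;> simp [blockCLM_apply, mul_apply] <;> module
  rw [← conj_unit_iff hP (blockCLM A B B A), key, isUnit_diag_iff,
    BlockAux2.isUnit_smul_iff (by norm_num : (2:ℂ) ≠ 0), BlockAux2.isUnit_smul_iff (by norm_num : (2:ℂ) ≠ 0)]

/-- If `a²·1 − BC` is a unit (and `BC = CB`), then `[[a,B],[C,a]]` is a unit. -/
lemma isUnit_scalar_block (a : ℂ) (B C : H →L[ℂ] H) (hBC : B * C = C * B)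
    (h : IsUnit ((a ^ 2) • (1 : H →L[ℂ] H) - B * C)) :
    IsUnit (blockCLM (a • 1) B C (a • 1)) := by
  set δ : H →L[ℂ] H := (a ^ 2) • (1 : H →L[ℂ] H) - B * C with hδ
  set M : H × H →L[ℂ] H × H := blockCLM (a • 1) B C (a • 1) with hM
  set adjM : H × H →L[ℂ] H × H := blockCLM (a • 1) (-B) (-C) (a • 1) with hadjM
  have h1 : M * adjM = blockCLM δ 0 0 δ := by
    rw [hM, hadjM, blockCLM_mul]
    congr 1 <;> [skip; skip; skip; skip]
    · ext x; simp [mul_apply, hδ]; module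
    · ext x; simp [mul_apply]; try module
    · ext x; simp [mul_apply]; try module
    · have hcb : ∀ x, C (B x) = B (C x) := fun x => by
        have := congrArg (fun (T : H →L[ℂ] H) => T x) hBC.symm
        simpa [mul_apply] using this
      ext x; simp [mul_apply, hδ, hcb]; module
  have h2 : adjM * M = blockCLM δ 0 0 δ := by
    rw [hM, hadjM, blockCLM_mul]
    congr 1 <;> [skip; skip; skip; skip]
    · ext x; simp [mul_apply, hδ]; module
    · ext x; simp [mul_apply]; try module
    · ext x; simp [mul_apply]; try module
    · have hcb : ∀ x, C (B x) = B (C x) := fun x => by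
        have := congrArg (fun (T : H →L[ℂ] H) => T x) hBC.symm
        simpa [mul_apply] using this
      ext x; simp [mul_apply, hδ, hcb]; module
  have hδu : IsUnit (blockCLM δ 0 0 δ) := (isUnit_diag_iff δ δ).2 ⟨h, h⟩
  -- right inverse N, left inverse N'
  set E : H × H →L[ℂ] H × H := ↑hδu.unit⁻¹ with hE
  have hER : blockCLM δ 0 0 δ * E = 1 := hδu.mul_val_inv
  have hEL : E * blockCLM δ 0 0 δ = 1 := hδu.val_inv_mul
  have hright : M * (adjM * E) = 1 := by rw [← mul_assoc, h1, hER]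
  have hleft : (E * adjM) * M = 1 := by rw [mul_assoc, h2, hEL]
  have heq : adjM * E = E * adjM := by
    have : (E * adjM) * (M * (adjM * E)) = E * adjM := by rw [hright, mul_one]
    calc adjM * E = ((E * adjM) * M) * (adjM * E) := by rw [hleft, one_mul]
    _ = (E * adjM) * (M * (adjM * E)) := by rw [mul_assoc]
    _ = E * adjM := this
  exact isUnit_iff_exists.2 ⟨adjM * E, hright, by rw [heq]; exact hleft⟩

end BlockAux3

namespace ScalarAux
open ShiftAux BlockAux BlockAux2 BlockAux3

instance : Nontrivial HT := by
  refine ⟨⟨0, lp.single 2 0 1, fun h => ?_⟩⟩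
  have := congrArg (fun f : HT => (f : ∀ _ : ℤ, ℂ) 0) h
  simp [lp.single_apply_self] at this

noncomputable def S : HT →L[ℂ] HT := shiftCLM 1 + shiftCLM (-1)

lemma S_selfAdjoint : IsSelfAdjoint S := by
  rw [IsSelfAdjoint, star_eq_adjoint]
  show ContinuousLinearMap.adjoint (shiftCLM 1 + shiftCLM (-1)) = S
  rw [map_add, adjoint_shiftCLM, adjoint_shiftCLM]
  simp [S, add_comm]

lemma norm_S_le : ‖S‖ ≤ 2 := by
  refine le_trans (norm_add_le _ _) ?_
  have h1 := norm_shiftCLM_le 1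
  have h2 := norm_shiftCLM_le (-1)
  linarith

lemma isUnit_scalar_S (c d : ℂ) (h : ∀ x : ℝ, -1 ≤ x → x ≤ 1 → c - 2 * d * (x:ℂ) ≠ 0) :
    IsUnit (c • (1 : HT →L[ℂ] HT) - d • S) := by
  by_cases hd : d = 0
  · have hc : c ≠ 0 := by
      have := h 0 (by norm_num) (by norm_num)
      simpa using this
    rw [hd, zero_smul, sub_zero]
    exact (BlockAux2.isUnit_smul_iff hc (1 : HT →L[ℂ] HT)).2 isUnit_one
  · have heq : c • (1 : HT →L[ℂ] HT) - d • S = d • ((c/d) • 1 - S) := by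
      rw [smul_sub, smul_smul]
      congr 2
      field_simp
    rw [heq, BlockAux2.isUnit_smul_iff hd]
    by_contra hcn
    have hmem : (c/d) ∈ spectrum ℂ S := by
      rw [spectrum.mem_iff, Algebra.algebraMap_eq_smul_one]
      exact hcn
    have hre : (c/d) = ((c/d).re : ℂ) := S_selfAdjoint.mem_spectrum_eq_re hmem
    have hb : ‖(c/d)‖ ≤ 2 := le_trans (spectrum.norm_le_norm_of_mem hmem) norm_S_le
    have hb2 : |(c/d).re| ≤ 2 := le_trans (Complex.abs_re_le_norm _) hb
    have := h ((c/d).re / 2) (by cases abs_le.1 hb2; linarith) (by cases abs_le.1 hb2; linarith)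
    apply this
    have hx : ((((c/d).re / 2 : ℝ)):ℂ) = (c/d) / 2 := by push_cast; rw [← hre]
    rw [hx]
    field_simp
    ring

end ScalarAux

namespace PacketAux
open ShiftAux

local notation "⟪" x ", " y "⟫" => @inner ℂ _ _ x y

noncomputable def flp (g : ℤ → ℂ) (s : Finset ℤ) (hg : ∀ k ∉ s, g k = 0) : HT :=
  ⟨g, memℓp_gen (by
    apply summable_of_ne_finset_zero (s := s)
    intro b hb
    rw [hg b hb]
    simp [Real.rpow_natCast])⟩

lemma flp_apply (g : ℤ → ℂ) (s : Finset ℤ) (hg : ∀ k ∉ s, g k = 0) (k : ℤ) :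
    flp g s hg k = g k := rfl

lemma norm_sq_eq_sum (f : HT) (s : Finset ℤ) (h0 : ∀ k ∉ s, (f : ∀ _ : ℤ, ℂ) k = 0) :
    ‖f‖ ^ 2 = ∑ k ∈ s, ‖(f : ∀ _ : ℤ, ℂ) k‖ ^ 2 := by
  rw [@norm_sq_eq_re_inner ℂ, lp.inner_eq_tsum,
    tsum_eq_sum (s := s) (fun b hb => by simp [h0 b hb])]
  rw [map_sum]
  congr 1
  funext k
  rw [RCLike.inner_apply', RCLike.conj_mul]
  norm_cast

end PacketAux

namespace PacketAux2
open ShiftAux PacketAux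

noncomputable def ec (θ : ℝ) (n : ℤ) : ℂ := Complex.exp ((n:ℂ) * θ * Complex.I)

noncomputable def emu (θ : ℝ) : ℂ := Complex.exp (-(θ:ℂ) * Complex.I)

noncomputable def elam (θ : ℝ) : ℂ := Complex.exp ((θ:ℂ) * Complex.I)

lemma norm_ec (θ : ℝ) (n : ℤ) : ‖ec θ n‖ = 1 := by
  rw [ec, Complex.norm_exp]
  simp

lemma norm_emu (θ : ℝ) : ‖emu θ‖ = 1 := by
  rw [emu, Complex.norm_exp]
  simp

lemma norm_elam (θ : ℝ) : ‖elam θ‖ = 1 := by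
  rw [elam, Complex.norm_exp]
  simp

lemma ec_sub_one (θ : ℝ) (n : ℤ) : ec θ (n - 1) = emu θ * ec θ n := by
  rw [ec, ec, emu, ← Complex.exp_add]
  congr 1
  push_cast
  ring

lemma ec_add_one (θ : ℝ) (n : ℤ) : ec θ (n + 1) = elam θ * ec θ n := by
  rw [ec, ec, elam, ← Complex.exp_add]
  congr 1
  push_cast
  ring

lemma emu_mul_elam (θ : ℝ) : emu θ * elam θ = 1 := by
  rw [emu, elam, ← Complex.exp_add]
  norm_num

lemma emu_add_elam (θ : ℝ) : emu θ + elam θ = 2 * Complex.cos θ := by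
  rw [emu, elam, Complex.exp_mul_I, Complex.exp_mul_I, Complex.cos_neg, Complex.sin_neg]
  ring

noncomputable def vN (θ : ℝ) (N : ℕ) : HT :=
  flp (fun k => if k ∈ Finset.Icc (-(N:ℤ)) (N:ℤ) then ec θ k else 0)
    (Finset.Icc (-(N:ℤ)) (N:ℤ)) (fun _ hk => if_neg hk)

lemma vN_apply (θ : ℝ) (N : ℕ) (k : ℤ) :
    vN θ N k = if k ∈ Finset.Icc (-(N:ℤ)) (N:ℤ) then ec θ k else 0 := rfl

lemma norm_sq_vN (θ : ℝ) (N : ℕ) : ‖vN θ N‖ ^ 2 = 2 * (N:ℝ) + 1 := by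
  rw [norm_sq_eq_sum (vN θ N) (Finset.Icc (-(N:ℤ)) (N:ℤ)) (fun _ hk => if_neg hk)]
  have : ∀ k ∈ Finset.Icc (-(N:ℤ)) (N:ℤ),
      ‖(vN θ N : ∀ _ : ℤ, ℂ) k‖ ^ 2 = 1 := by
    intro k hk
    rw [vN_apply, if_pos hk, norm_ec]
    norm_num
  rw [Finset.sum_congr rfl this, Finset.sum_const, Int.card_Icc]
  have h2 : ((N:ℤ) + 1 - -(N:ℤ)).toNat = 2 * N + 1 := by omega
  rw [h2]
  push_cast
  ring

lemma norm_le_two (D : HT) (j1 j2 : ℤ) (h0 : ∀ k, k ≠ j1 → k ≠ j2 → (D : ∀ _ : ℤ, ℂ) k = 0)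
    (hb : ∀ k, ‖(D : ∀ _ : ℤ, ℂ) k‖ ≤ 1) : ‖D‖ ≤ 2 := by
  have hsq : ‖D‖ ^ 2 ≤ 2 := by
    rw [norm_sq_eq_sum D {j1, j2} (by
      intro k hk
      simp only [Finset.mem_insert, Finset.mem_singleton] at hk
      push_neg at hk
      exact h0 k hk.1 hk.2)]
    calc ∑ k ∈ ({j1, j2} : Finset ℤ), ‖(D : ∀ _ : ℤ, ℂ) k‖ ^ 2
        ≤ ∑ _k ∈ ({j1, j2} : Finset ℤ), 1 := by
          apply Finset.sum_le_sum
          intro k _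
          have := hb k
          nlinarith [norm_nonneg ((D : ∀ _ : ℤ, ℂ) k)]
      _ ≤ 2 := by
          rw [Finset.sum_const, nsmul_eq_mul, mul_one]
          have := Finset.card_insert_le j1 ({j2} : Finset ℤ)
          simp at this ⊢
          norm_cast
  nlinarith [norm_nonneg D]

end PacketAux2

namespace MainAux
open ShiftAux BlockAux BlockAux2 BlockAux3 ScalarAux PacketAux PacketAux2

lemma forward_aux (T : HT →L[ℂ] HT) (hT : ∀ (f : HT) (n : ℤ), T f n = f (n - 1))
    (z0 z1 z2 z3 σ : ℂ) (hσ : σ = 1 ∨ σ = -1) (x : ℝ) (hx1 : -1 ≤ x) (hx2 : x ≤ 1)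
    (hzero : (z0 + σ*z3)^2 - z1^2 - z2^2 - 2*z1*z2*(x:ℂ) = 0) :
    ¬ IsUnit
      (blockCLM
        (blockCLM (z0 • (1 : HT →L[ℂ] HT)) (z1 • T + z2 • 1)
          (z1 • (adjoint T) + z2 • 1) (z0 • 1))
        (z3 • (1 : HT × HT →L[ℂ] HT × HT)) (z3 • 1)
        (blockCLM (z0 • (1 : HT →L[ℂ] HT)) (z1 • T + z2 • 1)
          (z1 • (adjoint T) + z2 • 1) (z0 • 1))) := by
  have hadj : ∀ (f : HT) (n : ℤ), (adjoint T) f n = f (n + 1) := by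
    have hTeq : T = shiftCLM 1 := by
      ext f n
      rw [hT, shiftCLM_apply]
    intro f n
    rw [hTeq, adjoint_shiftCLM, shiftCLM_apply, sub_neg_eq_add]
  set Rb : HT × HT →L[ℂ] HT × HT :=
    blockCLM (z0 • (1 : HT →L[ℂ] HT)) (z1 • T + z2 • 1)
      (z1 • (adjoint T) + z2 • 1) (z0 • 1) with hRb
  set M : (HT × HT) × (HT × HT) →L[ℂ] (HT × HT) × (HT × HT) :=
    blockCLM Rb (z3 • (1 : HT × HT →L[ℂ] HT × HT)) (z3 • 1) Rb with hMdef
  intro hU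
  obtain ⟨u, hu⟩ := hU
  have hbound : ∀ w : (HT × HT) × (HT × HT), ‖w‖ ≤ ‖(↑u⁻¹ : (HT × HT) × (HT × HT) →L[ℂ] (HT × HT) × (HT × HT))‖ * ‖M w‖ := by
    intro w
    have h1 : (↑u⁻¹ : (HT × HT) × (HT × HT) →L[ℂ] (HT × HT) × (HT × HT)) (M w) = w := by
      have h2 : (↑u⁻¹ * ↑u : (HT × HT) × (HT × HT) →L[ℂ] (HT × HT) × (HT × HT)) w = w := by
        rw [u.inv_mul]; rfl
      rwa [ContinuousLinearMap.mul_apply, hu] at h2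
    calc ‖w‖ = ‖(↑u⁻¹ : (HT × HT) × (HT × HT) →L[ℂ] (HT × HT) × (HT × HT)) (M w)‖ := by rw [h1]
      _ ≤ _ := le_opNorm _ _
  set C := ‖(↑u⁻¹ : (HT × HT) × (HT × HT) →L[ℂ] (HT × HT) × (HT × HT))‖ with hC
  -- kernel vector of the symbol
  set θ := Real.arccos x with hθ
  have hcos : Real.cos θ = x := Real.cos_arccos hx1 hx2
  set μ := emu θ with hμ
  set lam := elam θ with hlam
  have hml : μ * lam = 1 := emu_mul_elam θ
  have hsum : μ + lam = 2 * (x:ℂ) := by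
    rw [hμ, hlam, emu_add_elam, ← Complex.ofReal_cos, hcos]
  set a := z0 + σ * z3 with ha
  set b := z1 * μ + z2 with hb
  set c := z1 * lam + z2 with hc
  have ha2 : a ^ 2 = b * c := by
    have hexp : b * c = z1^2 * (μ*lam) + z1*z2*(μ+lam) + z2^2 := by ring
    rw [hexp, hml, hsum]
    linear_combination hzero
  obtain ⟨p, q, hpq, h1, h2⟩ :
      ∃ p q : ℂ, ¬(p = 0 ∧ q = 0) ∧ a*p + b*q = 0 ∧ c*p + a*q = 0 := by
    by_cases hab : a = 0 ∧ b = 0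
    · exact ⟨0, 1, by simp, by simp [hab.1, hab.2], by simp [hab.1]⟩
    · refine ⟨b, -a, ?_, by ring, by linear_combination -ha2⟩
      intro h
      exact hab ⟨by simpa using h.2, h.1⟩
  have hσσ : σ * σ = 1 := by rcases hσ with h | h <;> rw [h] <;> norm_num
  have hσn : ‖σ‖ = 1 := by rcases hσ with h | h <;> rw [h] <;> simp
  set m := max ‖p‖ ‖q‖ with hm
  have hmpos : 0 < m := by
    rw [hm, lt_max_iff]
    by_contra hcon
    push_neg at hcon
    have h1' : p = 0 := by
      have := hcon.1; have := norm_nonneg p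
      exact norm_eq_zero.1 (le_antisymm (by linarith) (norm_nonneg p))
    have h2' : q = 0 := by
      have := hcon.2
      exact norm_eq_zero.1 (le_antisymm (by linarith) (norm_nonneg q))
    exact hpq ⟨h1', h2'⟩
  set K := 2 * (‖p‖ + ‖q‖) * ‖z1‖ with hK
  have hKnn : 0 ≤ K := by positivity
  have hCnn : 0 ≤ C := norm_nonneg _
  -- the per-N estimate
  have key : ∀ N : ℕ, m ^ 2 * (2 * (N:ℝ) + 1) ≤ (C * K) ^ 2 := by
    intro N
    set v := vN θ N with hv
    set D1 : HT := T v - μ • v with hD1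
    set D2 : HT := (adjoint T) v - lam • v with hD2
    have hTv : T v = μ • v + D1 := by rw [hD1]; abel
    have hAv : (adjoint T) v = lam • v + D2 := by rw [hD2]; abel
    -- D1 estimates
    have hD1c : ∀ k : ℤ, (D1 : ∀ _ : ℤ, ℂ) k
        = (if k - 1 ∈ Finset.Icc (-(N:ℤ)) (N:ℤ) then ec θ (k-1) else 0)
          - μ * (if k ∈ Finset.Icc (-(N:ℤ)) (N:ℤ) then ec θ k else 0) := by
      intro k
      rw [hD1]
      rw [lp.coeFn_sub, Pi.sub_apply, lp.coeFn_smul, Pi.smul_apply, hT]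
      rw [hv, vN_apply, vN_apply]
      rfl
    have hD1supp : ∀ k : ℤ, k ≠ -(N:ℤ) → k ≠ (N:ℤ)+1 → (D1 : ∀ _ : ℤ, ℂ) k = 0 := by
      intro k hk1 hk2
      rw [hD1c k]
      by_cases hA : k - 1 ∈ Finset.Icc (-(N:ℤ)) (N:ℤ) <;>
        by_cases hB : k ∈ Finset.Icc (-(N:ℤ)) (N:ℤ)
      · rw [if_pos hA, if_pos hB, ec_sub_one, ← hμ]; ring
      · exfalso; rw [Finset.mem_Icc] at hA hB; omega
      · exfalso; rw [Finset.mem_Icc] at hA hB; omega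
      · rw [if_neg hA, if_neg hB]; ring
    have hD1b : ∀ k : ℤ, ‖(D1 : ∀ _ : ℤ, ℂ) k‖ ≤ 1 := by
      intro k
      rw [hD1c k]
      by_cases hA : k - 1 ∈ Finset.Icc (-(N:ℤ)) (N:ℤ) <;>
        by_cases hB : k ∈ Finset.Icc (-(N:ℤ)) (N:ℤ)
      · rw [if_pos hA, if_pos hB, ec_sub_one, ← hμ]
        simp
      · rw [if_pos hA, if_neg hB, mul_zero, sub_zero, norm_ec]
      · rw [if_neg hA, if_pos hB, zero_sub, norm_neg, norm_mul, norm_emu θ, norm_ec, one_mul]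
      · rw [if_neg hA, if_neg hB, mul_zero, sub_zero, norm_zero]; norm_num
    have hD1n : ‖D1‖ ≤ 2 := norm_le_two D1 (-(N:ℤ)) ((N:ℤ)+1) hD1supp hD1b
    -- D2 estimates
    have hD2c : ∀ k : ℤ, (D2 : ∀ _ : ℤ, ℂ) k
        = (if k + 1 ∈ Finset.Icc (-(N:ℤ)) (N:ℤ) then ec θ (k+1) else 0)
          - lam * (if k ∈ Finset.Icc (-(N:ℤ)) (N:ℤ) then ec θ k else 0) := by
      intro k
      rw [hD2]
      rw [lp.coeFn_sub, Pi.sub_apply, lp.coeFn_smul, Pi.smul_apply, hadj]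
      rw [hv, vN_apply, vN_apply]
      rfl
    have hD2supp : ∀ k : ℤ, k ≠ (N:ℤ) → k ≠ -(N:ℤ)-1 → (D2 : ∀ _ : ℤ, ℂ) k = 0 := by
      intro k hk1 hk2
      rw [hD2c k]
      by_cases hA : k + 1 ∈ Finset.Icc (-(N:ℤ)) (N:ℤ) <;>
        by_cases hB : k ∈ Finset.Icc (-(N:ℤ)) (N:ℤ)
      · rw [if_pos hA, if_pos hB, ec_add_one, ← hlam]; ring
      · exfalso; rw [Finset.mem_Icc] at hA hB; omega
      · exfalso; rw [Finset.mem_Icc] at hA hB; omega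
      · rw [if_neg hA, if_neg hB]; ring
    have hD2b : ∀ k : ℤ, ‖(D2 : ∀ _ : ℤ, ℂ) k‖ ≤ 1 := by
      intro k
      rw [hD2c k]
      by_cases hA : k + 1 ∈ Finset.Icc (-(N:ℤ)) (N:ℤ) <;>
        by_cases hB : k ∈ Finset.Icc (-(N:ℤ)) (N:ℤ)
      · rw [if_pos hA, if_pos hB, ec_add_one, ← hlam]
        simp
      · rw [if_pos hA, if_neg hB, mul_zero, sub_zero, norm_ec]
      · rw [if_neg hA, if_pos hB, zero_sub, norm_neg, norm_mul, norm_elam θ, norm_ec, one_mul]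
      · rw [if_neg hA, if_neg hB, mul_zero, sub_zero, norm_zero]; norm_num
    have hD2n : ‖D2‖ ≤ 2 := norm_le_two D2 ((N:ℤ)) (-(N:ℤ)-1) hD2supp hD2b
    -- apply M to the approximate kernel vector
    set w1 : HT × HT := (p • v, q • v) with hw1
    set W : HT × HT := ((q*z1) • D1, (p*z1) • D2) with hW
    have hRw : Rb w1 + (σ*z3) • w1 = W := by
      rw [hRb, hw1, hW]
      rw [BlockAux.blockCLM_apply]
      have hfst : (σ * z3) • ((p • v, q • v) : HT × HT) = ((σ*z3) • (p • v), (σ*z3) • (q • v)) := rfl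
      rw [hfst]
      apply Prod.ext
      · show (z0 • (1 : HT →L[ℂ] HT)) (p • v) + (z1 • T + z2 • 1) (q • v) + (σ*z3) • (p • v)
          = (q*z1) • D1
        simp only [ContinuousLinearMap.add_apply, ContinuousLinearMap.smul_apply,
          ContinuousLinearMap.one_apply, map_smul]
        rw [hTv]
        match_scalars
        · linear_combination h1
        · ring
      · show (z1 • (adjoint T) + z2 • 1) (p • v) + (z0 • (1 : HT →L[ℂ] HT)) (q • v) + (σ*z3) • (q • v)
          = (p*z1) • D2
        simp only [ContinuousLinearMap.add_apply, ContinuousLinearMap.smul_apply,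
          ContinuousLinearMap.one_apply, map_smul]
        rw [hAv]
        match_scalars
        · linear_combination h2
        · ring
    have hMw : M ((w1, σ • w1)) = (W, σ • W) := by
      rw [hMdef, BlockAux.blockCLM_apply]
      apply Prod.ext
      · show Rb w1 + (z3 • (1 : HT × HT →L[ℂ] HT × HT)) (σ • w1) = W
        rw [← hRw]
        simp only [ContinuousLinearMap.smul_apply, ContinuousLinearMap.one_apply]
        rw [smul_smul, mul_comm z3 σ]
      · show (z3 • (1 : HT × HT →L[ℂ] HT × HT)) w1 + Rb (σ • w1) = σ • W
        simp only [ContinuousLinearMap.smul_apply, ContinuousLinearMap.one_apply]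
        rw [← hRw, map_smul, smul_add, smul_smul]
        have hz : σ * (σ * z3) = z3 := by rw [← mul_assoc, hσσ, one_mul]
        rw [hz]
        abel
    -- norm estimates
    have hWn : ‖W‖ ≤ K := by
      rw [hW, Prod.norm_def]
      apply max_le
      · rw [norm_smul, norm_mul]
        have : ‖q‖ * ‖z1‖ * ‖D1‖ ≤ ‖q‖ * ‖z1‖ * 2 := by
          apply mul_le_mul_of_nonneg_left hD1n (by positivity)
        rw [hK]
        nlinarith [norm_nonneg p, norm_nonneg q, norm_nonneg z1]
      · rw [norm_smul, norm_mul]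
        have : ‖p‖ * ‖z1‖ * ‖D2‖ ≤ ‖p‖ * ‖z1‖ * 2 := by
          apply mul_le_mul_of_nonneg_left hD2n (by positivity)
        rw [hK]
        nlinarith [norm_nonneg p, norm_nonneg q, norm_nonneg z1]
    have hMwn : ‖M ((w1, σ • w1))‖ ≤ K := by
      rw [hMw, Prod.norm_def, norm_smul, hσn, one_mul, max_self]
      exact hWn
    have hwlow : m * ‖v‖ ≤ ‖((w1, σ • w1) : (HT × HT) × (HT × HT))‖ := by
      have h3 : ‖((w1, σ • w1) : (HT × HT) × (HT × HT))‖ = ‖w1‖ := by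
        rw [Prod.norm_def, norm_smul, hσn, one_mul, max_self]
      rw [h3, hw1, Prod.norm_def, hm]
      rw [norm_smul, norm_smul]
      rw [max_mul_of_nonneg _ _ (norm_nonneg v)]
    have hfin : m * ‖v‖ ≤ C * K := by
      calc m * ‖v‖ ≤ ‖((w1, σ • w1) : (HT × HT) × (HT × HT))‖ := hwlow
        _ ≤ C * ‖M ((w1, σ • w1))‖ := hbound _
        _ ≤ C * K := mul_le_mul_of_nonneg_left hMwn hCnn
    have hsq : (m * ‖v‖) ^ 2 ≤ (C * K) ^ 2 := by
      apply sq_le_sq' _ hfin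
      have : 0 ≤ m * ‖v‖ := by positivity
      nlinarith
    calc m ^ 2 * (2 * (N:ℝ) + 1) = m ^ 2 * ‖v‖ ^ 2 := by rw [hv, norm_sq_vN]
      _ = (m * ‖v‖) ^ 2 := by ring
      _ ≤ (C * K) ^ 2 := hsq
  -- contradiction
  set Q := (C * K) ^ 2 / m ^ 2 with hQ
  have hfin2 : ∀ N : ℕ, 2 * (N:ℝ) + 1 ≤ Q := by
    intro N
    rw [hQ, le_div_iff₀ (by positivity)]
    have := key N
    linarith
  obtain ⟨N, hN⟩ := exists_nat_gt Q
  have := hfin2 N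
  linarith
end MainAux

/-- The 4×4 operator matrix
`[[z0, z1T+z2, z3, 0],[z1T*+z2, z0, 0, z3],[z3, 0, z0, z1T+z2],[0, z3, z1T*+z2, z0]]`
on `(L²)⁴`, written as the 2×2 block matrix `[[R(z̃), z3 I],[z3 I, R(z̃)]]` where
`R(z̃) = [[z0, z1T+z2],[z1T*+z2, z0]]`, is invertible iff
`(z0 ± z3)² − z1² − z2² − 2 z1 z2 x ≠ 0` for every `x ∈ [−1, 1]`. -/
theorem stmt_1 (T : HT →L[ℂ] HT) (hT : ∀ (f : HT) (n : ℤ), T f n = f (n - 1))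
    (z0 z1 z2 z3 : ℂ) :
    IsUnit
      (blockCLM
        (blockCLM (z0 • (1 : HT →L[ℂ] HT)) (z1 • T + z2 • 1)
          (z1 • (adjoint T) + z2 • 1) (z0 • 1))
        (z3 • (1 : HT × HT →L[ℂ] HT × HT)) (z3 • 1)
        (blockCLM (z0 • (1 : HT →L[ℂ] HT)) (z1 • T + z2 • 1)
          (z1 • (adjoint T) + z2 • 1) (z0 • 1))) ↔
      ∀ x : ℝ, -1 ≤ x → x ≤ 1 →
        (z0 - z3) ^ 2 - z1 ^ 2 - z2 ^ 2 - 2 * z1 * z2 * (x : ℂ) ≠ 0 ∧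
        (z0 + z3) ^ 2 - z1 ^ 2 - z2 ^ 2 - 2 * z1 * z2 * (x : ℂ) ≠ 0 := by

  constructor
  · intro hU x hx1 hx2
    constructor
    · intro hzero
      exact MainAux.forward_aux T hT z0 z1 z2 z3 (-1) (Or.inr rfl) x hx1 hx2
        (by linear_combination hzero) hU
    · intro hzero
      exact MainAux.forward_aux T hT z0 z1 z2 z3 1 (Or.inl rfl) x hx1 hx2
        (by linear_combination hzero) hU
  · intro h
    have hTeq : T = ShiftAux.shiftCLM 1 := by
      ext f n
      rw [hT, ShiftAux.shiftCLM_apply]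
    have hadj : ContinuousLinearMap.adjoint T = ShiftAux.shiftCLM (-1) := by
      rw [hTeq, ShiftAux.adjoint_shiftCLM]
    set Bop : HT →L[ℂ] HT := z1 • T + z2 • 1 with hBop
    set Cop : HT →L[ℂ] HT := z1 • (adjoint T) + z2 • 1 with hCop
    have hUV : ShiftAux.shiftCLM 1 * ShiftAux.shiftCLM (-1) = 1 := by
      rw [ShiftAux.shift_mul_shift]; norm_num [ShiftAux.shift_zero]
    have hVU : ShiftAux.shiftCLM (-1) * ShiftAux.shiftCLM 1 = 1 := by
      rw [ShiftAux.shift_mul_shift]; norm_num [ShiftAux.shift_zero]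
    have hBC : Bop * Cop = (z1^2 + z2^2) • (1 : HT →L[ℂ] HT) + (z1*z2) • ScalarAux.S := by
      rw [hBop, hCop, hadj, hTeq, ScalarAux.S]
      rw [add_mul, mul_add, mul_add, smul_mul_smul_comm, smul_mul_smul_comm,
        smul_mul_smul_comm, smul_mul_smul_comm, hUV, mul_one, one_mul, mul_one]
      module
    have hCB : Cop * Bop = (z1^2 + z2^2) • (1 : HT →L[ℂ] HT) + (z1*z2) • ScalarAux.S := by
      rw [hBop, hCop, hadj, hTeq, ScalarAux.S]
      rw [add_mul, mul_add, mul_add, smul_mul_smul_comm, smul_mul_smul_comm,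
        smul_mul_smul_comm, smul_mul_smul_comm, hVU, mul_one, one_mul, mul_one]
      module
    have hcomm : Bop * Cop = Cop * Bop := by rw [hBC, hCB]
    apply (BlockAux3.isUnit_symm_iff _ _).2
    constructor
    · -- R + z3 • 1
      have heq : blockCLM (z0 • (1 : HT →L[ℂ] HT)) Bop Cop (z0 • 1) + z3 • 1
          = blockCLM ((z0 + z3) • 1) Bop Cop ((z0 + z3) • 1) := by
        rw [BlockAux.blockCLM_smul_one, BlockAux.blockCLM_add, add_zero, add_zero, ← add_smul]
      rw [heq]
      apply BlockAux3.isUnit_scalar_block _ _ _ hcomm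
      have heq2 : ((z0 + z3)^2) • (1 : HT →L[ℂ] HT) - Bop * Cop
          = ((z0 + z3)^2 - z1^2 - z2^2) • 1 - (z1*z2) • ScalarAux.S := by
        rw [hBC]; module
      rw [heq2]
      apply ScalarAux.isUnit_scalar_S
      intro x hx1 hx2 hEq
      exact (h x hx1 hx2).2 (by linear_combination hEq)
    · -- R - z3 • 1
      have heq : blockCLM (z0 • (1 : HT →L[ℂ] HT)) Bop Cop (z0 • 1) - z3 • 1
          = blockCLM ((z0 - z3) • 1) Bop Cop ((z0 - z3) • 1) := by
        rw [BlockAux.blockCLM_smul_one, BlockAux.blockCLM_sub, sub_zero, sub_zero, ← sub_smul]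
      rw [heq]
      apply BlockAux3.isUnit_scalar_block _ _ _ hcomm
      have heq2 : ((z0 - z3)^2) • (1 : HT →L[ℂ] HT) - Bop * Cop
          = ((z0 - z3)^2 - z1^2 - z2^2) • 1 - (z1*z2) • ScalarAux.S := by
        rw [hBC]; module
      rw [heq2]
      apply ScalarAux.isUnit_scalar_S
      intro x hx1 hx2 hEq
      exact (h x hx1 hx2).1 (by linear_combination hEq)
end

section
/- (1/2π) ∫₀^{2π} (16+8cosθ)(4096cos²θ + 10624cosθ + 6841) / ((79+64cosθ)²(71+64cosθ)²) dθ = 14872/(45045√105) − 7896/(45045√2145). -/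
open Real

lemma deriv_H (a b s : ℝ) (hb : 0 < b) (hab : b < a) (hs : 0 < s)
    (hs2 : s ^ 2 = a ^ 2 - b ^ 2) (θ : ℝ) :
    HasDerivAt (fun t => t + 2 * arctan ((s - a) / b * Real.sin t / (1 - (s - a) / b * Real.cos t)))
      (s / (a + b * Real.cos θ)) θ := by
  set r : ℝ := (s - a) / b with hr
  have hrb : r * b = s - a := div_mul_cancel₀ _ hb.ne'
  have hsa : s < a := by nlinarith
  have hras : a - s < b := by nlinarith [sq_nonneg (a - s)]
  have hrneg : -1 < r := by rw [hr, lt_div_iff₀ hb]; nlinarith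
  have hr0 : r < 0 := div_neg_of_neg_of_pos (by linarith) hb
  have hcos1 := Real.neg_one_le_cos θ
  have hcos2 := Real.cos_le_one θ
  have hne : (1 : ℝ) - r * Real.cos θ ≠ 0 := by nlinarith
  have hApos : 0 < a + b * Real.cos θ := by nlinarith
  have hu := ((Real.hasDerivAt_sin θ).const_mul r).div
      (((Real.hasDerivAt_cos θ).const_mul r).const_sub 1) hne
  have h := (hasDerivAt_id θ).add ((hu.arctan).const_mul 2)
  convert h using 1
  · rfl
  · rfl
  · rfl
  have hsin : Real.sin θ ^ 2 = 1 - Real.cos θ ^ 2 := by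
    have := Real.sin_sq_add_cos_sq θ; linarith
  have h1u : 1 + (r * Real.sin θ / (1 - r * Real.cos θ)) ^ 2 ≠ 0 := by positivity
  have E : s * (1 - 2 * r * Real.cos θ + r ^ 2) = (1 - r ^ 2) * (a + b * Real.cos θ) := by
    rw [hr]
    field_simp
    linear_combination (s - a - b * Real.cos θ) * hs2
  clear_value r
  simp only [Pi.div_apply]
  have hne' : 1 - Real.cos θ * r ≠ 0 := by rwa [mul_comm]
  field_simp
  linear_combination E +
    r ^ 2 * (s + a + b * Real.cos θ) * hsin

lemma deriv_G (a b s : ℝ) (hb : 0 < b) (hab : b < a) (hs : 0 < s)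
    (hs2 : s ^ 2 = a ^ 2 - b ^ 2) (θ : ℝ) :
    HasDerivAt (fun t =>
      (a * ((t + 2 * arctan ((s - a) / b * Real.sin t / (1 - (s - a) / b * Real.cos t))) / s)
        - b * Real.sin t / (a + b * Real.cos t)) / (a ^ 2 - b ^ 2))
      (1 / (a + b * Real.cos θ) ^ 2) θ := by
  have hcos1 := Real.neg_one_le_cos θ
  have hcos2 := Real.cos_le_one θ
  have hApos : 0 < a + b * Real.cos θ := by nlinarith
  have hd2 : s ^ 2 ≠ 0 := by positivity
  have hd : a ^ 2 - b ^ 2 ≠ 0 := by rw [← hs2]; positivity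
  have h1 := ((deriv_H a b s hb hab hs hs2 θ).div_const s).const_mul a
  have h2 := ((Real.hasDerivAt_sin θ).const_mul b).div
      (((Real.hasDerivAt_cos θ).const_mul b).const_add a) hApos.ne'
  have h := (h1.sub h2).div_const (a ^ 2 - b ^ 2)
  convert h using 1
  · rfl
  · rfl
  · rfl
  have hsin : Real.sin θ ^ 2 = 1 - Real.cos θ ^ 2 := by
    have := Real.sin_sq_add_cos_sq θ; linarith
  have e1 : a * (s / (a + b * Real.cos θ) / s) = a / (a + b * Real.cos θ) := by
    field_simp
  rw [e1]
  field_simp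
  linear_combination b ^ 2 * hsin


noncomputable def Hh (a s t : ℝ) : ℝ :=
  t + 2 * Real.arctan ((s - a) / 64 * Real.sin t / (1 - (s - a) / 64 * Real.cos t))

noncomputable def Gg (a s t : ℝ) : ℝ :=
  (a * (Hh a s t / s) - 64 * Real.sin t / (a + 64 * Real.cos t)) / (a ^ 2 - 64 ^ 2)

noncomputable def Ff (s1 s2 t : ℝ) : ℝ :=
  (-1/16) * (Hh 79 s1 t / s1) + (-49/16) * Gg 79 s1 t
    + (3/16) * (Hh 71 s2 t / s2) + (171/16) * Gg 71 s2 t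

theorem stmt_13 :
    (1 / (2 * π)) * ∫ θ in (0:ℝ)..(2 * π),
        (16 + 8 * Real.cos θ) * (4096 * Real.cos θ ^ 2 + 10624 * Real.cos θ + 6841) /
          ((79 + 64 * Real.cos θ) ^ 2 * (71 + 64 * Real.cos θ) ^ 2)
      = 14872 / (45045 * Real.sqrt 105) - 7896 / (45045 * Real.sqrt 2145) := by
  have h105 : (0:ℝ) < Real.sqrt 105 := Real.sqrt_pos.mpr (by norm_num)
  have h2145 : (0:ℝ) < Real.sqrt 2145 := Real.sqrt_pos.mpr (by norm_num)
  set s1 : ℝ := Real.sqrt 2145 with hs1def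
  set s2 : ℝ := 3 * Real.sqrt 105 with hs2def
  have hs1 : 0 < s1 := h2145
  have hs2 : 0 < s2 := by positivity
  have hs1sq : s1 ^ 2 = (79:ℝ) ^ 2 - 64 ^ 2 := by
    rw [hs1def, Real.sq_sqrt (by norm_num : (0:ℝ) ≤ 2145)]; norm_num
  have hs2sq : s2 ^ 2 = (71:ℝ) ^ 2 - 64 ^ 2 := by
    rw [hs2def, mul_pow, Real.sq_sqrt (by norm_num : (0:ℝ) ≤ 105)]; norm_num
  have hb : (0:ℝ) < 64 := by norm_num
  have hderiv : ∀ θ : ℝ, HasDerivAt (Ff s1 s2)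
      ((16 + 8 * Real.cos θ) * (4096 * Real.cos θ ^ 2 + 10624 * Real.cos θ + 6841) /
          ((79 + 64 * Real.cos θ) ^ 2 * (71 + 64 * Real.cos θ) ^ 2)) θ := by
    intro θ
    have h1 := ((deriv_H 79 64 s1 hb (by norm_num) hs1 hs1sq θ).div_const s1).const_mul (-1/16 : ℝ)
    have h2 := (deriv_G 79 64 s1 hb (by norm_num) hs1 hs1sq θ).const_mul (-49/16 : ℝ)
    have h3 := ((deriv_H 71 64 s2 hb (by norm_num) hs2 hs2sq θ).div_const s2).const_mul (3/16 : ℝ)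
    have h4 := (deriv_G 71 64 s2 hb (by norm_num) hs2 hs2sq θ).const_mul (171/16 : ℝ)
    have h := ((h1.add h2).add h3).add h4
    unfold Ff Gg Hh
    convert h using 1
    · rfl
    · rfl
    · rfl
    have hA : (0:ℝ) < 79 + 64 * Real.cos θ := by nlinarith [Real.neg_one_le_cos θ]
    have hB : (0:ℝ) < 71 + 64 * Real.cos θ := by nlinarith [Real.neg_one_le_cos θ]
    have hA2 : 79 + Real.cos θ * 64 ≠ 0 := by linarith
    have hB2 : 71 + Real.cos θ * 64 ≠ 0 := by linarith
    field_simp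
    ring
  have hA : ∀ x : ℝ, (0:ℝ) < 79 + 64 * Real.cos x := fun x => by nlinarith [Real.neg_one_le_cos x]
  have hB : ∀ x : ℝ, (0:ℝ) < 71 + 64 * Real.cos x := fun x => by nlinarith [Real.neg_one_le_cos x]
  have hcont : Continuous (fun θ : ℝ =>
      (16 + 8 * Real.cos θ) * (4096 * Real.cos θ ^ 2 + 10624 * Real.cos θ + 6841) /
        ((79 + 64 * Real.cos θ) ^ 2 * (71 + 64 * Real.cos θ) ^ 2)) := by
    apply Continuous.div (by continuity) (by continuity)
    intro x
    have := hA x; have := hB x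
    positivity
  have hint : IntervalIntegrable (fun θ : ℝ =>
      (16 + 8 * Real.cos θ) * (4096 * Real.cos θ ^ 2 + 10624 * Real.cos θ + 6841) /
        ((79 + 64 * Real.cos θ) ^ 2 * (71 + 64 * Real.cos θ) ^ 2)) MeasureTheory.volume 0 (2 * π) :=
    hcont.intervalIntegrable _ _
  rw [intervalIntegral.integral_eq_sub_of_hasDerivAt (fun t _ => hderiv t) hint]
  unfold Ff Gg Hh
  simp only [Real.sin_two_pi, Real.cos_two_pi, Real.sin_zero, Real.cos_zero, mul_zero, zero_div,
    zero_mul, Real.arctan_zero, add_zero, zero_add, mul_one]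
  have hpi : π ≠ 0 := Real.pi_ne_zero
  rw [hs1def, hs2def]
  field_simp
  ring
end
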